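/- Let A and B be real symmetric positive semidefinite p×p matrices and let λ > 0. Then |tr((A + λI_p)⁻²) − tr((B + λI_p)⁻²)| ≤ rank(A − B)/λ². -/

import Mathlib

open Matrix

section AuxLemmas

open Finset

variable {p : ℕ} {ι : Type*}


private lemma sum_dotProduct' (s : Finset ι) (f : ι → Fin p → ℝ) (w : Fin p → ℝ) :
    (∑ i ∈ s, f i) ⬝ᵥ w = ∑ i ∈ s, f i ⬝ᵥ w := by
  simp only [dotProduct, Finset.sum_apply, Finset.sum_mul]
  rw [Finset.sum_comm]

private lemma dotProduct_sum' (s : Finset ι) (f : ι → Fin p → ℝ) (w : Fin p → ℝ) :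
    w ⬝ᵥ (∑ i ∈ s, f i) = ∑ i ∈ s, w ⬝ᵥ f i := by
  simp only [dotProduct, Finset.sum_apply, Finset.mul_sum]
  rw [Finset.sum_comm]

private lemma mulVec_sum' (s : Finset ι) (M : Matrix (Fin p) (Fin p) ℝ) (f : ι → Fin p → ℝ) :
    M *ᵥ (∑ i ∈ s, f i) = ∑ i ∈ s, M *ᵥ f i := by
  simp only [← mulVecLin_apply, map_sum]

private lemma quad_repr (M : Matrix (Fin p) (Fin p) ℝ) (μ : Fin p → ℝ)
    (v : Fin p → Fin p → ℝ)
    (hortho : ∀ i j, v i ⬝ᵥ v j = if i = j then (1:ℝ) else 0)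
    (heig : ∀ i, M *ᵥ v i = μ i • v i)
    (T : Finset (Fin p)) (w : Fin p → ℝ)
    (hw : w ∈ Submodule.span ℝ (Set.range fun i : {i // i ∈ T} => v i)) :
    ∃ c : {i // i ∈ T} → ℝ,
      w ⬝ᵥ (M *ᵥ w) = ∑ i, (c i)^2 * μ (i : Fin p) ∧ w ⬝ᵥ w = ∑ i, (c i)^2 := by
  obtain ⟨c, hc⟩ := (Submodule.mem_span_range_iff_exists_fun ℝ).mp hw
  have key : ∀ g : {i // i ∈ T} → ℝ,
      w ⬝ᵥ (∑ j, g j • v j) = ∑ j, c j * g j := by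
    intro g
    rw [← hc, sum_dotProduct']
    simp only [dotProduct_sum', smul_dotProduct, dotProduct_smul, hortho, smul_eq_mul,
      mul_ite, mul_one, mul_zero, Subtype.coe_inj]
    simp [Finset.sum_ite_eq]
  have hMw : M *ᵥ w = ∑ j : {i // i ∈ T}, (c j * μ (j : Fin p)) • v (j : Fin p) := by
    rw [← hc, mulVec_sum']
    refine Finset.sum_congr rfl fun j _ => ?_
    rw [mulVec_smul, heig, smul_smul]
  refine ⟨c, ?_, ?_⟩
  · rw [hMw, key]
    exact Finset.sum_congr rfl fun j _ => by ring
  · nth_rewrite 2 [← hc]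
    rw [key]
    exact Finset.sum_congr rfl fun j _ => by ring

private lemma indep_on (v : Fin p → Fin p → ℝ)
    (hortho : ∀ i j, v i ⬝ᵥ v j = if i = j then (1:ℝ) else 0) (T : Finset (Fin p)) :
    LinearIndependent ℝ (fun i : {i // i ∈ T} => v i) := by
  rw [Fintype.linearIndependent_iff]
  intro g hg j
  have h2 : (∑ i : {i // i ∈ T}, g i • v (i : Fin p)) ⬝ᵥ v (j : Fin p) = g j := by
    have h3 : ∀ i : {i // i ∈ T}, (g i • v (i : Fin p)) ⬝ᵥ v (j : Fin p)
        = if i = j then g i else 0 := by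
      intro i
      rw [smul_dotProduct, hortho, smul_eq_mul, mul_ite, mul_one, mul_zero]
      simp [Subtype.coe_inj]
    rw [sum_dotProduct']
    simp [h3]
  rw [hg] at h2
  simpa using h2.symm

private lemma count_lemma (M N : Matrix (Fin p) (Fin p) ℝ)
    (μ ν : Fin p → ℝ) (vM vN : Fin p → Fin p → ℝ)
    (hoM : ∀ i j, vM i ⬝ᵥ vM j = if i = j then (1:ℝ) else 0)
    (hoN : ∀ i j, vN i ⬝ᵥ vN j = if i = j then (1:ℝ) else 0)
    (heM : ∀ i, M *ᵥ vM i = μ i • vM i)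
    (heN : ∀ i, N *ᵥ vN i = ν i • vN i)
    (s : ℝ) :
    #(univ.filter fun i => ν i < s) ≤ #(univ.filter fun i => μ i < s) + (M - N).rank := by
  classical
  by_contra hcon
  push_neg at hcon
  set T := univ.filter fun i => ν i < s with hT
  set S := univ.filter fun i => μ i < s with hS
  set E := Submodule.span ℝ (Set.range fun i : {i // i ∈ T} => vN i) with hE
  set K := LinearMap.ker (M - N).mulVecLin with hK
  set F := Submodule.span ℝ (Set.range fun i : {i // i ∈ Sᶜ} => vM i) with hF
  have hEc : Module.finrank ℝ E = T.card := by
    rw [hE, finrank_span_eq_card (indep_on vN hoN T), Fintype.card_coe]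
  have hFc : Module.finrank ℝ F = Sᶜ.card := by
    rw [hF, finrank_span_eq_card (indep_on vM hoM Sᶜ), Fintype.card_coe]
  have hKc : (M - N).rank + Module.finrank ℝ K = p := by
    simpa [Matrix.rank] using LinearMap.finrank_range_add_finrank_ker (M - N).mulVecLin
  have hScompl : S.card + Sᶜ.card = p := by
    simpa using Finset.card_add_card_compl S
  have h1 : Module.finrank ℝ (E ⊔ K : Submodule ℝ (Fin p → ℝ))
      + Module.finrank ℝ (E ⊓ K : Submodule ℝ (Fin p → ℝ))
      = Module.finrank ℝ E + Module.finrank ℝ K :=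
    Submodule.finrank_sup_add_finrank_inf_eq E K
  have h2 : Module.finrank ℝ ((E ⊓ K) ⊔ F : Submodule ℝ (Fin p → ℝ))
      + Module.finrank ℝ ((E ⊓ K) ⊓ F : Submodule ℝ (Fin p → ℝ))
      = Module.finrank ℝ (E ⊓ K : Submodule ℝ (Fin p → ℝ)) + Module.finrank ℝ F :=
    Submodule.finrank_sup_add_finrank_inf_eq _ _
  have hb1 : Module.finrank ℝ (E ⊔ K : Submodule ℝ (Fin p → ℝ)) ≤ p := by
    simpa using Submodule.finrank_le (E ⊔ K)
  have hb2 : Module.finrank ℝ ((E ⊓ K) ⊔ F : Submodule ℝ (Fin p → ℝ)) ≤ p := by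
    simpa using Submodule.finrank_le ((E ⊓ K) ⊔ F)
  have hTp : T.card ≤ p := by simpa using Finset.card_le_univ T
  have hpos : 0 < Module.finrank ℝ ((E ⊓ K) ⊓ F : Submodule ℝ (Fin p → ℝ)) := by omega
  obtain ⟨x, hx⟩ := Module.finrank_pos_iff_exists_ne_zero.mp hpos
  obtain ⟨hEK, hwF⟩ := Submodule.mem_inf.mp x.2
  obtain ⟨hwE, hwK⟩ := Submodule.mem_inf.mp hEK
  set w : Fin p → ℝ := (x : Fin p → ℝ) with hwdef
  have hwne : w ≠ 0 := fun h => hx (Submodule.coe_eq_zero.mp h)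
  have hww : 0 < w ⬝ᵥ w := by
    have h1' : 0 ≤ w ⬝ᵥ w := Finset.sum_nonneg fun i _ => mul_self_nonneg _
    rcases h1'.lt_or_eq with h2' | h2'
    · exact h2'
    · exact absurd (dotProduct_self_eq_zero.mp h2'.symm) hwne
  have hMNw : w ⬝ᵥ (M *ᵥ w) = w ⬝ᵥ (N *ᵥ w) := by
    have h0 : (M - N) *ᵥ w = 0 := hwK
    rw [sub_mulVec, sub_eq_zero] at h0
    rw [h0]
  have hNs : w ⬝ᵥ (N *ᵥ w) < s * (w ⬝ᵥ w) := by
    obtain ⟨c, hc1, hc2⟩ := quad_repr N ν vN hoN heN T w hwE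
    have hex : ∃ i₀ : {i // i ∈ T}, c i₀ ≠ 0 := by
      by_contra hall
      push_neg at hall
      rw [hwdef] at hc2
      rw [hc2] at hww
      simp [hall] at hww
    obtain ⟨i₀, hi₀⟩ := hex
    have hlt : ∀ i : {i // i ∈ T}, ν (i : Fin p) < s := fun i =>
      (Finset.mem_filter.mp i.2).2
    calc w ⬝ᵥ (N *ᵥ w) = ∑ i : {i // i ∈ T}, (c i)^2 * ν (i : Fin p) := hc1
      _ < ∑ i : {i // i ∈ T}, (c i)^2 * s := by
          refine Finset.sum_lt_sum (fun i _ => mul_le_mul_of_nonneg_left (hlt i).le (sq_nonneg _))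
            ⟨i₀, Finset.mem_univ _, ?_⟩
          have : 0 < (c i₀)^2 := by positivity
          exact mul_lt_mul_of_pos_left (hlt i₀) this
      _ = s * (w ⬝ᵥ w) := by rw [← Finset.sum_mul, ← hc2, mul_comm]
  have hMs : s * (w ⬝ᵥ w) ≤ w ⬝ᵥ (M *ᵥ w) := by
    obtain ⟨c, hc1, hc2⟩ := quad_repr M μ vM hoM heM Sᶜ w hwF
    have hge : ∀ i : {i // i ∈ Sᶜ}, s ≤ μ (i : Fin p) := by
      intro i
      have hns := Finset.mem_compl.mp i.2
      by_contra hc'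
      push_neg at hc'
      exact hns (Finset.mem_filter.mpr ⟨Finset.mem_univ _, hc'⟩)
    calc s * (w ⬝ᵥ w) = ∑ i : {i // i ∈ Sᶜ}, (c i)^2 * s := by
          rw [← Finset.sum_mul, ← hc2, mul_comm]
      _ ≤ ∑ i : {i // i ∈ Sᶜ}, (c i)^2 * μ (i : Fin p) :=
          Finset.sum_le_sum fun i _ => mul_le_mul_of_nonneg_left (hge i) (sq_nonneg _)
      _ = w ⬝ᵥ (M *ᵥ w) := hc1.symm
  linarith


private lemma card_filter_perm (σ : Equiv.Perm (Fin p)) (P : Fin p → Prop) [DecidablePred P] :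
    #(univ.filter fun i => P (σ i)) = #(univ.filter P) := by
  apply Finset.card_bij (fun i _ => σ i)
  · intro a ha
    simp only [Finset.mem_filter, Finset.mem_univ, true_and] at ha ⊢
    exact ha
  · intro a ha b hb hab
    exact σ.injective hab
  · intro b hb
    refine ⟨σ.symm b, ?_, by simp⟩
    simp only [Finset.mem_filter, Finset.mem_univ, true_and] at hb ⊢
    simpa using hb

private lemma sum_f_le (r : ℕ) (μ ν : Fin p → ℝ) (f : ℝ → ℝ) (c : ℝ)
    (hf : Antitone f) (hf0 : ∀ x, 0 ≤ f x) (hfc : ∀ x, f x ≤ c)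
    (hcount : ∀ s : ℝ, #(univ.filter fun i => ν i < s) ≤ #(univ.filter fun i => μ i < s) + r) :
    ∑ i, f (ν i) ≤ ∑ i, f (μ i) + r * c := by
  classical
  have hc0 : 0 ≤ c := le_trans (hf0 0) (hfc 0)
  set σ := Tuple.sort μ with hσ
  set τ := Tuple.sort ν with hτ
  set μ' := μ ∘ σ with hμ'
  set ν' := ν ∘ τ with hν'
  have hμmono : Monotone μ' := Tuple.monotone_sort μ
  have hνmono : Monotone ν' := Tuple.monotone_sort ν
  -- transfer counting
  have hcount' : ∀ s : ℝ, #(univ.filter fun i => ν' i < s) ≤ #(univ.filter fun i => μ' i < s) + r := by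
    intro s
    have e1 : (univ.filter fun i => ν' i < s) = (univ.filter fun i => ν (τ i) < s) := rfl
    have e2 : (univ.filter fun i => μ' i < s) = (univ.filter fun i => μ (σ i) < s) := rfl
    rw [e1, e2, card_filter_perm τ (fun i => ν i < s), card_filter_perm σ (fun i => μ i < s)]
    exact hcount s
  -- key interlacing
  have key : ∀ k : ℕ, ∀ h : r + k < p, μ' ⟨k, by omega⟩ ≤ ν' ⟨r + k, h⟩ := by
    intro k h
    by_contra hlt
    push_neg at hlt
    set s := μ' ⟨k, by omega⟩ with hs
    have hν : Finset.Iic (⟨r + k, h⟩ : Fin p) ⊆ univ.filter fun i => ν' i < s := by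
      intro j hj
      rw [Finset.mem_Iic] at hj
      refine Finset.mem_filter.mpr ⟨Finset.mem_univ _, lt_of_le_of_lt (hνmono hj) hlt⟩
    have hν2 : r + k + 1 ≤ #(univ.filter fun i => ν' i < s) := by
      calc r + k + 1 = #(Finset.Iic (⟨r + k, h⟩ : Fin p)) := by rw [Fin.card_Iic]
        _ ≤ _ := Finset.card_le_card hν
    have hμ : (univ.filter fun i => μ' i < s) ⊆ Finset.Iio (⟨k, by omega⟩ : Fin p) := by
      intro j hj
      rw [Finset.mem_filter] at hj
      rw [Finset.mem_Iio]
      by_contra hjk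
      push_neg at hjk
      exact absurd (hμmono hjk) (not_le.mpr hj.2)
    have hμ2 : #(univ.filter fun i => μ' i < s) ≤ k := by
      calc #(univ.filter fun i => μ' i < s) ≤ #(Finset.Iio (⟨k, by omega⟩ : Fin p)) :=
            Finset.card_le_card hμ
        _ = k := Fin.card_Iio _
    have := hcount' s
    omega
  -- sums
  have hsumν : ∑ i, f (ν i) = ∑ i, f (ν' i) := (Equiv.sum_comp τ (f ∘ ν)).symm
  have hsumμ : ∑ i, f (μ i) = ∑ i, f (μ' i) := (Equiv.sum_comp σ (f ∘ μ)).symm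
  rw [hsumν, hsumμ]
  set FF : ℕ → ℝ := fun k => if h : k < p then f (ν' ⟨k, h⟩) else 0 with hFF
  set GG : ℕ → ℝ := fun k => if h : k < p then f (μ' ⟨k, h⟩) else 0 with hGG
  have hFν : ∑ i, f (ν' i) = ∑ k ∈ Finset.range p, FF k := by
    rw [← Fin.sum_univ_eq_sum_range]
    exact Finset.sum_congr rfl fun i _ => by simp [hFF]
  have hGμ : ∑ i, f (μ' i) = ∑ k ∈ Finset.range p, GG k := by
    rw [← Fin.sum_univ_eq_sum_range]
    exact Finset.sum_congr rfl fun i _ => by simp [hGG]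
  rw [hFν, hGμ]
  by_cases hrp : p ≤ r
  · have h1 : ∑ k ∈ Finset.range p, FF k ≤ p * c := by
      calc ∑ k ∈ Finset.range p, FF k ≤ ∑ _k ∈ Finset.range p, c :=
            Finset.sum_le_sum fun k _ => by
              by_cases h : k < p
              · simp only [hFF, dif_pos h]; exact hfc _
              · simp only [hFF, dif_neg h]; exact hc0
        _ = p * c := by rw [Finset.sum_const, Finset.card_range, nsmul_eq_mul]
    have h2 : (0:ℝ) ≤ ∑ k ∈ Finset.range p, GG k :=
      Finset.sum_nonneg fun k _ => by
        by_cases h : k < p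
        · simp only [hGG, dif_pos h]; exact hf0 _
        · simp only [hGG, dif_neg h]; exact le_rfl
    have h3 : (p:ℝ) * c ≤ (r:ℝ) * c :=
      mul_le_mul_of_nonneg_right (Nat.cast_le.mpr hrp) hc0
    linarith
  · push_neg at hrp
    have hsplit : ∑ k ∈ Finset.range p, FF k
        = ∑ k ∈ Finset.range r, FF k + ∑ k ∈ Finset.range (p - r), FF (r + k) := by
      have h0 : ∑ k ∈ Finset.Ico 0 r, FF k + ∑ k ∈ Finset.Ico r p, FF k
          = ∑ k ∈ Finset.Ico 0 p, FF k :=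
        Finset.sum_Ico_consecutive FF (Nat.zero_le r) hrp.le
      have hA : ∑ k ∈ Finset.Ico r p, FF k = ∑ k ∈ Finset.range (p - r), FF (r + k) :=
        Finset.sum_Ico_eq_sum_range FF r p
      rw [← Finset.range_eq_Ico, ← Finset.range_eq_Ico] at h0
      rw [← h0, hA]
    have h1 : ∑ k ∈ Finset.range r, FF k ≤ r * c := by
      calc ∑ k ∈ Finset.range r, FF k ≤ ∑ _k ∈ Finset.range r, c :=
            Finset.sum_le_sum fun k _ => by
              by_cases h : k < p
              · simp only [hFF, dif_pos h]; exact hfc _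
              · simp only [hFF, dif_neg h]; exact hc0
        _ = r * c := by rw [Finset.sum_const, Finset.card_range, nsmul_eq_mul]
    have h2 : ∑ k ∈ Finset.range (p - r), FF (r + k) ≤ ∑ k ∈ Finset.range (p - r), GG k := by
      refine Finset.sum_le_sum fun k hk => ?_
      rw [Finset.mem_range] at hk
      have hkr : r + k < p := by omega
      have hkp : k < p := by omega
      simp only [hFF, hGG, dif_pos hkr, dif_pos hkp]
      exact hf (key k hkr)
    have h3 : ∑ k ∈ Finset.range (p - r), GG k ≤ ∑ k ∈ Finset.range p, GG k := by
      refine Finset.sum_le_sum_of_subset_of_nonneg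
        (Finset.range_subset_range.mpr (Nat.sub_le p r)) fun k _ _ => ?_
      by_cases h : k < p
      · simp only [hGG, dif_pos h]; exact hf0 _
      · simp only [hGG, dif_neg h]; exact le_rfl
    linarith


private lemma ortho_dp (M : Matrix (Fin p) (Fin p) ℝ) (hM : M.IsHermitian) :
    ∀ i j, ⇑(hM.eigenvectorBasis i) ⬝ᵥ ⇑(hM.eigenvectorBasis j) = if i = j then (1:ℝ) else 0 := by
  intro i j
  have h := orthonormal_iff_ite.mp hM.eigenvectorBasis.orthonormal i j
  rw [PiLp.inner_apply] at h
  simpa [dotProduct, mul_comm] using h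

private lemma eig_formula (M : Matrix (Fin p) (Fin p) ℝ) (hM : M.IsHermitian) (i : Fin p) :
    hM.eigenvalues i = ⇑(hM.eigenvectorBasis i) ⬝ᵥ (M *ᵥ ⇑(hM.eigenvectorBasis i)) := by
  rw [dotProduct_comm, hM.mulVec_eigenvectorBasis, smul_dotProduct, ortho_dp M hM]
  simp

private lemma eig_ge (A : Matrix (Fin p) (Fin p) ℝ) (hA : A.PosSemidef) (lam : ℝ)
    (hM : (A + lam • (1 : Matrix (Fin p) (Fin p) ℝ)).IsHermitian) (i : Fin p) :
    lam ≤ hM.eigenvalues i := by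
  set v := ⇑(hM.eigenvectorBasis i) with hv
  have hvv : v ⬝ᵥ v = 1 := by
    have := ortho_dp _ hM i i
    simpa using this
  have hAv : 0 ≤ v ⬝ᵥ (A *ᵥ v) := by
    have := hA.dotProduct_mulVec_nonneg v
    simpa using this
  rw [eig_formula _ hM i]
  rw [add_mulVec, dotProduct_add, smul_mulVec, one_mulVec, dotProduct_smul, hvv]
  simpa using hAv

private lemma trace_inv_sq (M : Matrix (Fin p) (Fin p) ℝ) (hM : M.IsHermitian)
    (hpos : ∀ i, hM.eigenvalues i ≠ 0) :
    (M⁻¹ ^ 2).trace = ∑ i, ((hM.eigenvalues i)⁻¹)^2 := by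
  classical
  set U : Matrix (Fin p) (Fin p) ℝ := (hM.eigenvectorUnitary : Matrix (Fin p) (Fin p) ℝ) with hU
  obtain ⟨hU1, hU2⟩ := Unitary.mem_iff.mp hM.eigenvectorUnitary.2
  set D : Matrix (Fin p) (Fin p) ℝ := diagonal hM.eigenvalues with hD
  set D' : Matrix (Fin p) (Fin p) ℝ := diagonal (fun i => (hM.eigenvalues i)⁻¹) with hD'
  have hDD' : D * D' = 1 := by
    rw [hD, hD', diagonal_mul_diagonal]
    have h9 : (fun i => hM.eigenvalues i * (hM.eigenvalues i)⁻¹) = fun _ => (1:ℝ) := by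
      funext i; exact mul_inv_cancel₀ (hpos i)
    rw [h9, diagonal_one]
  have hD'D' : D' * D' = diagonal (fun i => ((hM.eigenvalues i)⁻¹)^2) := by
    have h9 : (fun i => (hM.eigenvalues i)⁻¹ * (hM.eigenvalues i)⁻¹)
        = fun i => ((hM.eigenvalues i)⁻¹)^2 := funext fun i => (pow_two _).symm
    rw [hD', diagonal_mul_diagonal, h9]
  have hspec : M = U * D * star U := by
    have h := hM.spectral_theorem
    simpa using h
  have hsand : ∀ X Y : Matrix (Fin p) (Fin p) ℝ,
      (U * X * star U) * (U * Y * star U) = U * (X * Y) * star U := by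
    intro X Y
    calc (U * X * star U) * (U * Y * star U)
        = U * X * (star U * U) * Y * star U := by simp only [Matrix.mul_assoc]
      _ = U * (X * Y) * star U := by rw [hU1, Matrix.mul_one, Matrix.mul_assoc U X Y]
  have hinv : M⁻¹ = U * D' * star U := by
    apply inv_eq_right_inv
    have h1 : M * (U * D' * star U) = (U * D * star U) * (U * D' * star U) := by
      rw [← hspec]
    rw [h1, hsand, hDD']
    rw [Matrix.mul_one, hU2]
  rw [hinv, pow_two, hsand, hD'D', Matrix.trace_mul_cycle, hU1, Matrix.one_mul, trace_diagonal]


end AuxLemmas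

open Finset in
/-- For PSD matrices `A`, `B` and `λ > 0`,
`|tr((A + λI)⁻²) - tr((B + λI)⁻²)| ≤ rank(A - B)/λ²`. -/
theorem stmt_3 (p : ℕ) (A B : Matrix (Fin p) (Fin p) ℝ)
    (hA : A.PosSemidef) (hB : B.PosSemidef) (lam : ℝ) (hlam : 0 < lam) :
    |(((A + lam • (1 : Matrix (Fin p) (Fin p) ℝ))⁻¹ ^ 2)).trace -
      (((B + lam • (1 : Matrix (Fin p) (Fin p) ℝ))⁻¹ ^ 2)).trace| ≤
      ((A - B).rank : ℝ) / lam ^ 2 := by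
  classical
  have hsm : (lam • (1 : Matrix (Fin p) (Fin p) ℝ)).IsHermitian := by
    have : (lam • (1 : Matrix (Fin p) (Fin p) ℝ))ᴴ = lam • 1 := by
      rw [conjTranspose_smul]; simp
    exact this
  set M := A + lam • (1 : Matrix (Fin p) (Fin p) ℝ) with hMdef
  set N := B + lam • (1 : Matrix (Fin p) (Fin p) ℝ) with hNdef
  have hMH : M.IsHermitian := hA.1.add hsm
  have hNH : N.IsHermitian := hB.1.add hsm
  set μ := hMH.eigenvalues with hμdef
  set ν := hNH.eigenvalues with hνdef
  have hμlam : ∀ i, lam ≤ μ i := fun i => eig_ge A hA lam hMH i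
  have hνlam : ∀ i, lam ≤ ν i := fun i => eig_ge B hB lam hNH i
  have hμ0 : ∀ i, μ i ≠ 0 := fun i => ne_of_gt (lt_of_lt_of_le hlam (hμlam i))
  have hν0 : ∀ i, ν i ≠ 0 := fun i => ne_of_gt (lt_of_lt_of_le hlam (hνlam i))
  set f : ℝ → ℝ := fun x => ((max x lam)^2)⁻¹ with hfdef
  set c : ℝ := (lam^2)⁻¹ with hcdef
  have hlam2 : (0:ℝ) < lam^2 := by positivity
  have hf : Antitone f := by
    intro x y hxy
    have h1 : (0:ℝ) < (max x lam)^2 := by positivity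
    have h2 : (max x lam)^2 ≤ (max y lam)^2 :=
      pow_le_pow_left₀ (le_trans hlam.le (le_max_right x lam)) (max_le_max hxy le_rfl) 2
    exact inv_anti₀ h1 h2
  have hf0 : ∀ x, 0 ≤ f x := fun x => by positivity
  have hfc : ∀ x, f x ≤ c := by
    intro x
    exact inv_anti₀ hlam2 (pow_le_pow_left₀ hlam.le (le_max_right x lam) 2)
  have hfμ : ∀ i, f (μ i) = ((μ i)⁻¹)^2 := by
    intro i
    rw [hfdef]
    simp only [max_eq_left (hμlam i)]
    rw [inv_pow]
  have hfν : ∀ i, f (ν i) = ((ν i)⁻¹)^2 := by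
    intro i
    rw [hfdef]
    simp only [max_eq_left (hνlam i)]
    rw [inv_pow]
  have htrM : (M⁻¹ ^ 2).trace = ∑ i, f (μ i) := by
    rw [trace_inv_sq M hMH hμ0]
    exact Finset.sum_congr rfl fun i _ => (hfμ i).symm
  have htrN : (N⁻¹ ^ 2).trace = ∑ i, f (ν i) := by
    rw [trace_inv_sq N hNH hν0]
    exact Finset.sum_congr rfl fun i _ => (hfν i).symm
  have hMN : M - N = A - B := by
    rw [hMdef, hNdef]; abel
  have hNM : N - M = -(A - B) := by
    rw [hMdef, hNdef]; abel
  have hrankneg : (-(A - B)).rank = (A - B).rank := by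
    have h1 : (-(A - B)).mulVecLin = -(A - B).mulVecLin := by
      ext x
      simp [mulVecLin_apply, neg_mulVec]
    rw [Matrix.rank, Matrix.rank, h1, LinearMap.range_neg]
  set r := (A - B).rank with hrdef
  have hcount1 : ∀ s : ℝ, #(univ.filter fun i => ν i < s) ≤ #(univ.filter fun i => μ i < s) + r := by
    intro s
    have := count_lemma M N μ ν
      (fun i => ⇑(hMH.eigenvectorBasis i)) (fun i => ⇑(hNH.eigenvectorBasis i))
      (ortho_dp M hMH) (ortho_dp N hNH)
      (fun i => hMH.mulVec_eigenvectorBasis i) (fun i => hNH.mulVec_eigenvectorBasis i) s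
    rwa [hMN] at this
  have hcount2 : ∀ s : ℝ, #(univ.filter fun i => μ i < s) ≤ #(univ.filter fun i => ν i < s) + r := by
    intro s
    have := count_lemma N M ν μ
      (fun i => ⇑(hNH.eigenvectorBasis i)) (fun i => ⇑(hMH.eigenvectorBasis i))
      (ortho_dp N hNH) (ortho_dp M hMH)
      (fun i => hNH.mulVec_eigenvectorBasis i) (fun i => hMH.mulVec_eigenvectorBasis i) s
    rwa [hNM, hrankneg] at this
  have hs1 : ∑ i, f (ν i) ≤ ∑ i, f (μ i) + r * c := sum_f_le r μ ν f c hf hf0 hfc hcount1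
  have hs2 : ∑ i, f (μ i) ≤ ∑ i, f (ν i) + r * c := sum_f_le r ν μ f c hf hf0 hfc hcount2
  have hrc : ((r:ℝ)) / lam^2 = r * c := by
    rw [hcdef, div_eq_mul_inv]
  rw [abs_sub_le_iff]
  constructor
  · rw [htrM, htrN, hrc]; linarith
  · rw [htrM, htrN, hrc]; linarith
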